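/- Let a,b,c,d ∈ ℤ with ad − bc = 1. Then there is no odd integer q such that 4(ac+bd) = q·(c²+d²); equivalently, (ac+bd)/(c²+d²) does not lie in the set (1/4 + ℤ) ∪ (−1/4 + ℤ), and consequently cos(2πk·(ac+bd)/(c²+d²)) ≠ 0 for every nonzero integer k... in particular e^{2πik(ac+bd)/(c²+d²)} + e^{−2πik(ac+bd)/(c²+d²)} ≠ 0 for k = ±1. -/
import Mathlib


open scoped Real

lemma aux4' (a b c d : ℤ) (h : a * d - b * c = 1) : ¬ (4 ∣ c ^ 2 + d ^ 2) := by
  intro hd4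
  have h4 : ((c : ZMod 4) ^ 2 + (d : ZMod 4) ^ 2) = 0 := by
    have := (ZMod.intCast_zmod_eq_zero_iff_dvd (c ^ 2 + d ^ 2) 4).mpr hd4
    push_cast at this
    exact this
  have h1 : ((a : ZMod 4) * d - b * c) = 1 := by
    have : ((a * d - b * c : ℤ) : ZMod 4) = ((1 : ℤ) : ZMod 4) := by rw [h]
    push_cast at this
    exact this
  have : ∀ x y z w : ZMod 4, z ^ 2 + w ^ 2 = 0 → x * w - y * z ≠ 1 := by decide
  exact this a b c d h4 h1

lemma mainlem (a b c d k q : ℤ) (h : a * d - b * c = 1) (hq : Odd q)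
    (he : 4 * k * (a * c + b * d) = q * (c ^ 2 + d ^ 2)) : False := by
  set N := a * c + b * d with hN
  set M := c ^ 2 + d ^ 2 with hM
  have hM0 : M ≠ 0 := by
    intro h0
    have hc : c = 0 := by nlinarith [sq_nonneg c, sq_nonneg d]
    have hd' : d = 0 := by nlinarith [sq_nonneg c, sq_nonneg d]
    rw [hc, hd'] at h; simp at h
  have hcop : IsCoprime M N := ⟨a ^ 2 + b ^ 2, -(a * c + b * d), by
    linear_combination (a * d - b * c + 1) * h⟩
  have hdvd : M ∣ 4 * k := hcop.dvd_of_dvd_mul_right ⟨q, by linear_combination he⟩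
  obtain ⟨s, hs⟩ := hdvd
  have hsN : s * N = q := by
    have hMc : M * (s * N) = M * q := by linear_combination he - N * hs
    exact mul_left_cancel₀ hM0 hMc
  have hsodd : Odd s := (Int.odd_mul.mp (hsN ▸ hq)).1
  obtain ⟨t, ht⟩ := hsodd
  have h4M : (4 : ℤ) ∣ M := by
    have hcop4 : IsCoprime (4 : ℤ) s := ⟨-(t ^ 2 + t), s, by rw [ht]; ring⟩
    exact hcop4.dvd_of_dvd_mul_right ⟨k, by linear_combination -hs⟩
  exact aux4' a b c d h h4M

theorem statement12 (a b c d : ℤ) (h : a * d - b * c = 1) :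
    (¬ ∃ q : ℤ, Odd q ∧ 4 * (a * c + b * d) = q * (c ^ 2 + d ^ 2)) ∧
    (∀ n : ℤ, ((a * c + b * d : ℤ) : ℝ) / ((c ^ 2 + d ^ 2 : ℤ) : ℝ) ≠ 1 / 4 + n ∧
      ((a * c + b * d : ℤ) : ℝ) / ((c ^ 2 + d ^ 2 : ℤ) : ℝ) ≠ -(1 / 4) + n) ∧
    (∀ k : ℤ, k ≠ 0 →
      Real.cos (2 * π * k * (((a * c + b * d : ℤ) : ℝ) / ((c ^ 2 + d ^ 2 : ℤ) : ℝ))) ≠ 0) ∧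
    (∀ k : ℤ, k = 1 ∨ k = -1 →
      Complex.exp (2 * π * Complex.I * k *
          (((a * c + b * d : ℤ) : ℝ) / ((c ^ 2 + d ^ 2 : ℤ) : ℝ))) +
        Complex.exp (-(2 * π * Complex.I * k *
          (((a * c + b * d : ℤ) : ℝ) / ((c ^ 2 + d ^ 2 : ℤ) : ℝ)))) ≠ 0) := by
  have hM0 : (c ^ 2 + d ^ 2 : ℤ) ≠ 0 := by
    intro h0
    have hc : c = 0 := by nlinarith [sq_nonneg c, sq_nonneg d]
    have hd' : d = 0 := by nlinarith [sq_nonneg c, sq_nonneg d]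
    rw [hc, hd'] at h; simp at h
  have hMne : ((c ^ 2 + d ^ 2 : ℤ) : ℝ) ≠ 0 := Int.cast_ne_zero.mpr hM0
  have part3 : (∀ k : ℤ, k ≠ 0 →
      Real.cos (2 * π * k * (((a * c + b * d : ℤ) : ℝ) / ((c ^ 2 + d ^ 2 : ℤ) : ℝ))) ≠ 0) := by
    intro k hk hcos
    rw [Real.cos_eq_zero_iff] at hcos
    obtain ⟨m, hm⟩ := hcos
    have h2 : 2 * (k : ℝ) * (((a * c + b * d : ℤ) : ℝ) / ((c ^ 2 + d ^ 2 : ℤ) : ℝ))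
        = (2 * m + 1) / 2 := by
      apply mul_left_cancel₀ Real.pi_ne_zero
      linear_combination hm
    rw [← mul_div_assoc, div_eq_div_iff hMne (two_ne_zero)] at h2
    push_cast at h2
    have hZ : 4 * k * (a * c + b * d) = (2 * m + 1) * (c ^ 2 + d ^ 2) := by
      exact_mod_cast (by push_cast; linear_combination h2 :
        ((4 * k * (a * c + b * d) : ℤ) : ℝ) = (((2 * m + 1) * (c ^ 2 + d ^ 2) : ℤ) : ℝ))
    exact mainlem a b c d k (2 * m + 1) h ⟨m, by ring⟩ hZ
  refine ⟨?_, ?_, part3, ?_⟩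
  · rintro ⟨q, hq, he⟩
    exact mainlem a b c d 1 q h hq (by linarith)
  · intro n
    constructor <;> intro heq
    · rw [div_eq_iff hMne] at heq
      push_cast at heq
      have hZ : 4 * 1 * (a * c + b * d) = (4 * n + 1) * (c ^ 2 + d ^ 2) := by
        exact_mod_cast (by push_cast; linear_combination 4 * heq :
          ((4 * 1 * (a * c + b * d) : ℤ) : ℝ) = (((4 * n + 1) * (c ^ 2 + d ^ 2) : ℤ) : ℝ))
      exact mainlem a b c d 1 (4 * n + 1) h ⟨2 * n, by ring⟩ hZ
    · rw [div_eq_iff hMne] at heq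
      push_cast at heq
      have hZ : 4 * 1 * (a * c + b * d) = (4 * n - 1) * (c ^ 2 + d ^ 2) := by
        exact_mod_cast (by push_cast; linear_combination 4 * heq :
          ((4 * 1 * (a * c + b * d) : ℤ) : ℝ) = (((4 * n - 1) * (c ^ 2 + d ^ 2) : ℤ) : ℝ))
      exact mainlem a b c d 1 (4 * n - 1) h ⟨2 * n - 1, by ring⟩ hZ
  · intro k hk
    have hk0 : k ≠ 0 := by rcases hk with rfl | rfl <;> decide
    set x : ℝ := ((a * c + b * d : ℤ) : ℝ) / ((c ^ 2 + d ^ 2 : ℤ) : ℝ) with hx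
    have hA : (2 * π * Complex.I * k *
          (((a * c + b * d : ℤ) : ℝ) / ((c ^ 2 + d ^ 2 : ℤ) : ℝ)) : ℂ)
        = ((2 * π * k * x : ℝ) : ℂ) * Complex.I := by
      rw [hx]; push_cast; ring
    rw [hA]
    have hco : Complex.exp (((2 * π * k * x : ℝ) : ℂ) * Complex.I)
        + Complex.exp (-(((2 * π * k * x : ℝ) : ℂ) * Complex.I))
        = 2 * Complex.cos ((2 * π * k * x : ℝ) : ℂ) := by
      rw [Complex.cos]; ring_nf
    rw [hco, ← Complex.ofReal_cos]
    intro hz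
    have : Real.cos (2 * π * k * x) = 0 := by
      have := mul_eq_zero.mp hz
      rcases this with h2 | h2
      · norm_num at h2
      · exact_mod_cast h2
    exact part3 k hk0 this
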